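/- arXiv:2312.07119 — 6 statements merged into one kernel-verified Lean document; each statement's English description precedes it below -/
import Mathlib

section
/- Let λ ≠ 0, F ∈ O_2, and let G ∈ O_2 be the unique series with (λI + F)∘(λ^{-1}I + G) = I. If there exist r > 0 and α ∈ (0,1) with F^(r) ≤ |λ|αr, then G^(|λ|(1−α)r) ≤ αr. -/
open scoped ENNReal

noncomputable def pcoeff (f : PowerSeries ℂ) (k : ℕ) : ℂ := PowerSeries.coeff k f

/-- Composition of formal power series: (f∘g)_m = Σ_{k=0}^m f_k (g^k)_m. -/
noncomputable def pcomp (f g : PowerSeries ℂ) : PowerSeries ℂ :=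
  PowerSeries.mk fun m => ∑ k ∈ Finset.range (m + 1), pcoeff f k * pcoeff (g ^ k) m

/-- f ∈ O_m : the first m coefficients vanish. -/
def inO (m : ℕ) (f : PowerSeries ℂ) : Prop := ∀ i < m, pcoeff f i = 0

/-- Truncation [f]_d = f_0 + f_1 z + ... + f_d z^d, as a power series. -/
noncomputable def ptrunc (d : ℕ) (f : PowerSeries ℂ) : PowerSeries ℂ :=
  PowerSeries.mk fun k => if k ≤ d then pcoeff f k else 0

/-- Majorant evaluation f^(r) = Σ |f_k| r^k ∈ [0,∞]. -/
noncomputable def maj (f : PowerSeries ℂ) (r : ℝ≥0∞) : ℝ≥0∞ :=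
  ∑' k, (‖pcoeff f k‖₊ : ℝ≥0∞) * r ^ k

/-- Evaluation of a power series at a point. -/
noncomputable def peval (f : PowerSeries ℂ) (z : ℂ) : ℂ := ∑' k, pcoeff f k * z ^ k

/-- f has positive radius of convergence. -/
def posRadius (f : PowerSeries ℂ) : Prop :=
  ∃ r : ℝ, 0 < r ∧ Summable fun k => ‖pcoeff f k‖ * r ^ k

/-- The operator L_λ(H) = H∘(λI) − λH. -/
noncomputable def Lop (l : ℂ) (H : PowerSeries ℂ) : PowerSeries ℂ :=
  pcomp H (l • PowerSeries.X) - l • H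

/-! ### Auxiliary lemmas -/

lemma maj_mul_le (A B : PowerSeries ℂ) (s : ℝ≥0∞) : maj (A*B) s ≤ maj A s * maj B s := by
  unfold maj
  have h2 : (∑' k, (‖pcoeff A k‖₊ : ℝ≥0∞) * s ^ k) * (∑' k, (‖pcoeff B k‖₊ : ℝ≥0∞) * s ^ k)
      = ∑' (p : ℕ × ℕ), ((‖pcoeff A p.1‖₊ : ℝ≥0∞) * s ^ p.1) * ((‖pcoeff B p.2‖₊ : ℝ≥0∞) * s ^ p.2) := by
    rw [ENNReal.tsum_prod']
    rw [← ENNReal.tsum_mul_right]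
    congr 1; ext a
    rw [← ENNReal.tsum_mul_left]
  have h3 : ∑' (p : ℕ × ℕ), ((‖pcoeff A p.1‖₊ : ℝ≥0∞) * s ^ p.1) * ((‖pcoeff B p.2‖₊ : ℝ≥0∞) * s ^ p.2)
      = ∑' m, ∑ p ∈ Finset.HasAntidiagonal.antidiagonal m, ((‖pcoeff A p.1‖₊ : ℝ≥0∞) * s ^ p.1) * ((‖pcoeff B p.2‖₊ : ℝ≥0∞) * s ^ p.2) := by
    rw [← Finset.HasAntidiagonal.sigmaAntidiagonalEquivProd.tsum_eq]
    rw [ENNReal.tsum_sigma']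
    congr 1; ext m
    rw [← Finset.tsum_subtype]
    exact tsum_congr fun b => by simp [Finset.HasAntidiagonal.sigmaAntidiagonalEquivProd]
  rw [h2, h3]
  refine ENNReal.tsum_le_tsum fun m => ?_
  have h1 : pcoeff (A*B) m = ∑ p ∈ Finset.HasAntidiagonal.antidiagonal m, pcoeff A p.1 * pcoeff B p.2 :=
    PowerSeries.coeff_mul m A B
  calc (‖pcoeff (A*B) m‖₊ : ℝ≥0∞) * s ^ m
      ≤ (∑ p ∈ Finset.HasAntidiagonal.antidiagonal m, (‖pcoeff A p.1‖₊ : ℝ≥0∞) * ‖pcoeff B p.2‖₊) * s ^ m := by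
        gcongr
        rw [h1]
        calc (‖∑ p ∈ Finset.HasAntidiagonal.antidiagonal m, pcoeff A p.1 * pcoeff B p.2‖₊ : ℝ≥0∞)
            ≤ (↑(∑ p ∈ Finset.HasAntidiagonal.antidiagonal m, ‖pcoeff A p.1 * pcoeff B p.2‖₊) : ℝ≥0∞) := by
              exact_mod_cast nnnorm_sum_le _ _
          _ = ∑ p ∈ Finset.HasAntidiagonal.antidiagonal m, (‖pcoeff A p.1‖₊ : ℝ≥0∞) * ‖pcoeff B p.2‖₊ := by
              push_cast [nnnorm_mul]; rfl
    _ = ∑ p ∈ Finset.HasAntidiagonal.antidiagonal m, ((‖pcoeff A p.1‖₊ : ℝ≥0∞) * s ^ p.1) * ((‖pcoeff B p.2‖₊ : ℝ≥0∞) * s ^ p.2) := by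
        rw [Finset.sum_mul]
        refine Finset.sum_congr rfl fun p hp => ?_
        rw [Finset.HasAntidiagonal.mem_antidiagonal] at hp
        rw [← hp, pow_add]; ring

lemma inO_mul {a b : ℕ} {A B : PowerSeries ℂ} (hA : inO a A) (hB : inO b B) :
    inO (a + b) (A * B) := by
  intro i hi
  rw [pcoeff, PowerSeries.coeff_mul]
  refine Finset.sum_eq_zero fun p hp => ?_
  rw [Finset.HasAntidiagonal.mem_antidiagonal] at hp
  rcases lt_or_ge p.1 a with h | h
  · rw [show (PowerSeries.coeff p.1) A = pcoeff A p.1 from rfl, hA p.1 h, zero_mul]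
  · have : p.2 < b := by omega
    rw [show (PowerSeries.coeff p.2) B = pcoeff B p.2 from rfl, hB p.2 this, mul_zero]

lemma inO_pow {A : PowerSeries ℂ} (hA : inO 1 A) (k : ℕ) : inO k (A ^ k) := by
  induction k with
  | zero => intro i hi; omega
  | succ n ih =>
    rw [pow_succ]
    exact inO_mul ih hA

lemma inO_mono {a b : ℕ} {A : PowerSeries ℂ} (h : b ≤ a) (hA : inO a A) : inO b A :=
  fun i hi => hA i (lt_of_lt_of_le hi h)

lemma coeff_pow_trunc (H : PowerSeries ℂ) (hH : pcoeff H 0 = 0) (d k m : ℕ)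
    (hk : 2 ≤ k) (hm : m ≤ d + 1) :
    pcoeff (H ^ k) m = pcoeff (ptrunc d H ^ k) m := by
  set H' := ptrunc d H with hH'
  have hH1 : inO 1 H := by intro i hi; interval_cases i; exact hH
  have hH'1 : inO 1 H' := by
    intro i hi; interval_cases i
    have h0 : pcoeff H' 0 = if 0 ≤ d then pcoeff H 0 else 0 := by
      simp only [hH', ptrunc, pcoeff, PowerSeries.coeff_mk]
    rw [h0]; simp [hH]
  have hR : inO (d + 1) (H - H') := by
    intro i hi
    simp only [pcoeff, map_sub, hH', ptrunc, PowerSeries.coeff_mk]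
    rw [if_pos (by omega : i ≤ d)]
    simp [pcoeff]
  have hgeom : inO (k - 1) (∑ i ∈ Finset.range k, H ^ i * H' ^ (k - 1 - i)) := by
    intro j hj
    rw [pcoeff, map_sum]
    refine Finset.sum_eq_zero fun i hi => ?_
    rw [Finset.mem_range] at hi
    have : inO (k - 1) (H ^ i * H' ^ (k - 1 - i)) := by
      have := inO_mul (inO_pow hH1 i) (inO_pow hH'1 (k - 1 - i))
      exact inO_mono (by omega) this
    exact this j hj
  have key : inO ((k - 1) + (d + 1)) ((∑ i ∈ Finset.range k, H ^ i * H' ^ (k - 1 - i)) * (H - H')) :=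
    inO_mul hgeom hR
  have heq : H ^ k - H' ^ k = (∑ i ∈ Finset.range k, H ^ i * H' ^ (k - 1 - i)) * (H - H') :=
    (geom_sum₂_mul H H' k).symm
  have hz : pcoeff (H ^ k - H' ^ k) m = 0 := by
    rw [heq]; exact key m (by omega)
  rw [pcoeff, map_sub, sub_eq_zero] at hz
  exact hz

lemma maj_ptrunc (H : PowerSeries ℂ) (d : ℕ) (s : ℝ≥0∞) :
    maj (ptrunc d H) s = ∑ j ∈ Finset.range (d + 1), (‖pcoeff H j‖₊ : ℝ≥0∞) * s ^ j := by
  unfold maj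
  rw [tsum_eq_sum (s := Finset.range (d + 1))]
  · refine Finset.sum_congr rfl fun j hj => ?_
    rw [Finset.mem_range] at hj
    simp only [ptrunc, pcoeff, PowerSeries.coeff_mk, if_pos (by omega : j ≤ d)]
  · intro j hj
    rw [Finset.mem_range] at hj
    simp only [ptrunc, pcoeff, PowerSeries.coeff_mk, if_neg (by omega : ¬ j ≤ d)]
    simp

lemma maj_one (s : ℝ≥0∞) : maj 1 s ≤ 1 := by
  unfold maj
  rw [tsum_eq_sum (s := {0})]
  · simp [pcoeff]
  · intro j hj
    simp only [Finset.mem_singleton] at hj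
    simp [pcoeff, PowerSeries.coeff_one, hj]

lemma maj_pow_le (A : PowerSeries ℂ) (s : ℝ≥0∞) (k : ℕ) : maj (A ^ k) s ≤ (maj A s) ^ k := by
  induction k with
  | zero => simpa using maj_one s
  | succ n ih =>
    rw [pow_succ, pow_succ]
    calc maj (A ^ n * A) s ≤ maj (A ^ n) s * maj A s := maj_mul_le _ _ _
      _ ≤ (maj A s) ^ n * maj A s := by gcongr

theorem inverse_series_maj (l : ℂ) (hl : l ≠ 0) (F G : PowerSeries ℂ)
    (hF : inO 2 F) (hG : inO 2 G)
    (hinv : pcomp (l • PowerSeries.X + F) (l⁻¹ • PowerSeries.X + G) = PowerSeries.X)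
    (r α : ℝ) (hr : 0 < r) (hα0 : 0 < α) (hα1 : α < 1)
    (hmaj : maj F (ENNReal.ofReal r) ≤ ENNReal.ofReal (‖l‖ * α * r)) :
    maj G (ENNReal.ofReal (‖l‖ * (1 - α) * r)) ≤ ENNReal.ofReal (α * r) := by
  classical
  set s : ℝ≥0∞ := ENNReal.ofReal (‖l‖ * (1 - α) * r) with hs
  set R : ℝ≥0∞ := ENNReal.ofReal r with hRdef
  set H : PowerSeries ℂ := l⁻¹ • PowerSeries.X + G with hHdef
  have hln0 : (‖l‖₊ : ℝ≥0∞) ≠ 0 := by simpa using hl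
  have hlnt : (‖l‖₊ : ℝ≥0∞) ≠ ⊤ := ENNReal.coe_ne_top
  have hH0 : pcoeff H 0 = 0 := by
    simp only [hHdef, pcoeff, map_add, PowerSeries.coeff_smul, PowerSeries.coeff_X]
    rw [show (PowerSeries.coeff 0) G = pcoeff G 0 from rfl, hG 0 (by omega)]
    simp
  have hHm : ∀ m, 2 ≤ m → pcoeff H m = pcoeff G m := by
    intro m hm
    simp only [hHdef, pcoeff, map_add, PowerSeries.coeff_smul, PowerSeries.coeff_X,
      if_neg (by omega : ¬ m = 1)]
    simp
  -- coefficient identity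
  have key : ∀ m, 2 ≤ m → l * pcoeff G m =
      -∑ k ∈ Finset.range (m + 1), pcoeff F k * pcoeff (H ^ k) m := by
    intro m hm
    have h := congrArg (fun f => pcoeff f m) hinv
    simp only [pcomp, pcoeff, PowerSeries.coeff_mk] at h
    rw [PowerSeries.coeff_X, if_neg (by omega : ¬ m = 1)] at h
    have hsplit : ∀ k ∈ Finset.range (m + 1),
        PowerSeries.coeff k (l • PowerSeries.X + F) * PowerSeries.coeff m (H ^ k)
        = (if k = 1 then l * PowerSeries.coeff m (H ^ k) else 0)
          + pcoeff F k * pcoeff (H ^ k) m := by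
      intro k _
      rw [map_add, PowerSeries.coeff_smul, PowerSeries.coeff_X]
      by_cases hk : k = 1
      · subst hk
        have h1 : PowerSeries.coeff 1 F = 0 := hF 1 (by omega)
        simp [pcoeff, h1]
      · simp [hk, pcoeff]
    rw [Finset.sum_congr rfl hsplit, Finset.sum_add_distrib, Finset.sum_ite_eq'] at h
    rw [if_pos (Finset.mem_range.mpr (by omega)), pow_one] at h
    rw [show PowerSeries.coeff m H = pcoeff H m from rfl, hHm m hm] at h
    linear_combination h
  -- norm bound on coefficients of G
  have keybound : ∀ m, 2 ≤ m → (‖pcoeff G m‖₊ : ℝ≥0∞) ≤ (‖l‖₊ : ℝ≥0∞)⁻¹ *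
      ∑ k ∈ Finset.range (m + 1), (‖pcoeff F k‖₊ : ℝ≥0∞) * ‖pcoeff (H ^ k) m‖₊ := by
    intro m hm
    have h1 : (‖pcoeff G m‖₊ : ℝ≥0∞) = (‖l‖₊ : ℝ≥0∞)⁻¹ * ‖l * pcoeff G m‖₊ := by
      rw [nnnorm_mul, ENNReal.coe_mul, ← mul_assoc, ENNReal.inv_mul_cancel hln0 hlnt, one_mul]
    rw [h1]
    gcongr
    rw [key m hm, nnnorm_neg]
    calc (‖∑ k ∈ Finset.range (m + 1), pcoeff F k * pcoeff (H ^ k) m‖₊ : ℝ≥0∞)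
        ≤ (↑(∑ k ∈ Finset.range (m + 1), ‖pcoeff F k * pcoeff (H ^ k) m‖₊) : ℝ≥0∞) := by
          exact_mod_cast nnnorm_sum_le _ _
      _ = ∑ k ∈ Finset.range (m + 1), (‖pcoeff F k‖₊ : ℝ≥0∞) * ‖pcoeff (H ^ k) m‖₊ := by
          push_cast [nnnorm_mul]; rfl
  -- partial sums
  set Sp : ℕ → ℝ≥0∞ := fun N => ∑ m ∈ Finset.range N, (‖pcoeff H m‖₊ : ℝ≥0∞) * s ^ m with hSp
  set GP : ℕ → ℝ≥0∞ := fun N => ∑ m ∈ Finset.range N, (‖pcoeff G m‖₊ : ℝ≥0∞) * s ^ m with hGP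
  have hsl : s = (‖l‖₊ : ℝ≥0∞) * ENNReal.ofReal ((1 - α) * r) := by
    rw [hs, mul_assoc, ENNReal.ofReal_mul (norm_nonneg l),
      ← ENNReal.ofReal_coe_nnreal, coe_nnnorm]
  have hfr : ENNReal.ofReal (‖l‖ * α * r) = (‖l‖₊ : ℝ≥0∞) * ENNReal.ofReal (α * r) := by
    rw [mul_assoc, ENNReal.ofReal_mul (norm_nonneg l),
      ← ENNReal.ofReal_coe_nnreal, coe_nnnorm]
  have hSp2 : Sp 2 = ENNReal.ofReal ((1 - α) * r) := by
    simp only [hSp]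
    rw [Finset.sum_range_succ, Finset.sum_range_one, hH0]
    have hH1 : pcoeff H 1 = l⁻¹ := by
      simp only [hHdef, pcoeff, map_add, PowerSeries.coeff_smul, PowerSeries.coeff_X, if_pos rfl]
      rw [show (PowerSeries.coeff 1) G = pcoeff G 1 from rfl, hG 1 (by omega)]
      simp
    rw [hH1, hsl]
    simp only [nnnorm_zero, ENNReal.coe_zero, zero_mul, zero_add, pow_one, nnnorm_inv]
    rw [ENNReal.coe_inv (by simpa using hl), ← mul_assoc,
      ENNReal.inv_mul_cancel hln0 hlnt, one_mul]
  have hSp2' : Sp 2 ≤ R := by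
    rw [hSp2, hRdef]
    exact ENNReal.ofReal_le_ofReal (by nlinarith)
  -- main step
  have step : ∀ N, 2 ≤ N → Sp (N - 1) ≤ R → GP N ≤ ENNReal.ofReal (α * r) := by
    intro N hN hSpN
    set H' := ptrunc (N - 2) H with hH'def
    have hmajH' : maj H' s = Sp (N - 1) := by
      rw [hH'def, maj_ptrunc, show N - 2 + 1 = N - 1 by omega]
    have hpow : ∀ k, maj (H' ^ k) s ≤ R ^ k := by
      intro k
      calc maj (H' ^ k) s ≤ (maj H' s) ^ k := maj_pow_le _ _ _
        _ ≤ R ^ k := by rw [hmajH']; exact pow_le_pow_left' hSpN k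
    calc GP N ≤ ∑ m ∈ Finset.range N, (‖l‖₊ : ℝ≥0∞)⁻¹ *
              ∑ k ∈ Finset.range N, (‖pcoeff F k‖₊ : ℝ≥0∞) * ((‖pcoeff (H' ^ k) m‖₊ : ℝ≥0∞) * s ^ m) := by
            simp only [hGP]
            refine Finset.sum_le_sum fun m hm => ?_
            rw [Finset.mem_range] at hm
            rcases lt_or_ge m 2 with h2 | h2
            · have : pcoeff G m = 0 := hG m h2
              rw [this]; simp
            · calc (‖pcoeff G m‖₊ : ℝ≥0∞) * s ^ m
                  ≤ ((‖l‖₊ : ℝ≥0∞)⁻¹ *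
                      ∑ k ∈ Finset.range (m + 1), (‖pcoeff F k‖₊ : ℝ≥0∞) * ‖pcoeff (H ^ k) m‖₊) * s ^ m := by
                    gcongr; exact keybound m h2
            _ = (‖l‖₊ : ℝ≥0∞)⁻¹ *
                      ∑ k ∈ Finset.range (m + 1), (‖pcoeff F k‖₊ : ℝ≥0∞) * ((‖pcoeff (H' ^ k) m‖₊ : ℝ≥0∞) * s ^ m) := by
                    rw [mul_assoc, Finset.sum_mul]
                    congr 1
                    refine Finset.sum_congr rfl fun k _ => ?_
                    rcases lt_or_ge k 2 with hk2 | hk2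
                    · have : pcoeff F k = 0 := hF k hk2
                      rw [this]; simp
                    · have hrw : pcoeff (H ^ k) m = pcoeff (ptrunc (N - 2) H ^ k) m :=
                        coeff_pow_trunc H hH0 (N - 2) k m hk2 (show m ≤ N - 2 + 1 by omega)
                      rw [hrw, mul_assoc]
            _ ≤ (‖l‖₊ : ℝ≥0∞)⁻¹ *
                      ∑ k ∈ Finset.range N, (‖pcoeff F k‖₊ : ℝ≥0∞) * ((‖pcoeff (H' ^ k) m‖₊ : ℝ≥0∞) * s ^ m) := by
                    exact mul_le_mul_right
                      (Finset.sum_le_sum_of_subset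
                        (Finset.range_subset_range.mpr (show m + 1 ≤ N by omega))) _
      _ = (‖l‖₊ : ℝ≥0∞)⁻¹ * ∑ k ∈ Finset.range N, (‖pcoeff F k‖₊ : ℝ≥0∞) *
                ∑ m ∈ Finset.range N, (‖pcoeff (H' ^ k) m‖₊ : ℝ≥0∞) * s ^ m := by
              rw [← Finset.mul_sum]
              congr 1
              rw [Finset.sum_comm]
              exact Finset.sum_congr rfl fun k _ => (Finset.mul_sum _ _ _).symm
      _ ≤ (‖l‖₊ : ℝ≥0∞)⁻¹ * ∑ k ∈ Finset.range N, (‖pcoeff F k‖₊ : ℝ≥0∞) * R ^ k := by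
              gcongr with k hk
              calc ∑ m ∈ Finset.range N, (‖pcoeff (H' ^ k) m‖₊ : ℝ≥0∞) * s ^ m
                  ≤ maj (H' ^ k) s := ENNReal.sum_le_tsum _
            _ ≤ R ^ k := hpow k
      _ ≤ (‖l‖₊ : ℝ≥0∞)⁻¹ * maj F R := by
              gcongr
              exact ENNReal.sum_le_tsum _
      _ ≤ (‖l‖₊ : ℝ≥0∞)⁻¹ * ((‖l‖₊ : ℝ≥0∞) * ENNReal.ofReal (α * r)) := by
              gcongr
              rw [← hfr]; exact hmaj
      _ = ENNReal.ofReal (α * r) := by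
              rw [← mul_assoc, ENNReal.inv_mul_cancel hln0 hlnt, one_mul]
  -- main claim by strong induction
  have claim : ∀ N, Sp N ≤ R := by
    intro N
    induction N using Nat.strong_induction_on with
    | _ N ih =>
      rcases le_or_gt N 2 with h | h
      · calc Sp N ≤ Sp 2 :=
              Finset.sum_le_sum_of_subset (Finset.range_subset_range.mpr h)
          _ ≤ R := hSp2'
      · have h2 : 2 ≤ N := by omega
        have hIH : Sp (N - 1) ≤ R := ih (N - 1) (by omega)
        have hGPN := step N h2 hIH
        have hsplit : Sp N = Sp 2 + ∑ m ∈ Finset.Ico 2 N, (‖pcoeff H m‖₊ : ℝ≥0∞) * s ^ m := by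
          simp only [hSp]
          rw [Finset.range_eq_Ico]
          exact (Finset.sum_Ico_consecutive _ (by omega : 0 ≤ 2) (by omega : 2 ≤ N)).symm
        rw [hsplit]
        have htail : ∑ m ∈ Finset.Ico 2 N, (‖pcoeff H m‖₊ : ℝ≥0∞) * s ^ m ≤ GP N := by
          calc ∑ m ∈ Finset.Ico 2 N, (‖pcoeff H m‖₊ : ℝ≥0∞) * s ^ m
              = ∑ m ∈ Finset.Ico 2 N, (‖pcoeff G m‖₊ : ℝ≥0∞) * s ^ m := by
                refine Finset.sum_congr rfl fun m hm => ?_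
                rw [Finset.mem_Ico] at hm
                rw [hHm m hm.1]
            _ ≤ GP N := by
                simp only [hGP]
                refine Finset.sum_le_sum_of_subset ?_
                rw [Finset.range_eq_Ico]
                exact Finset.Ico_subset_Ico (by omega) le_rfl
        calc Sp 2 + ∑ m ∈ Finset.Ico 2 N, (‖pcoeff H m‖₊ : ℝ≥0∞) * s ^ m
            ≤ ENNReal.ofReal ((1 - α) * r) + ENNReal.ofReal (α * r) := by
              rw [hSp2]; gcongr; exact le_trans htail hGPN
          _ = R := by
              rw [hRdef, ← ENNReal.ofReal_add (by nlinarith) (by nlinarith)]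
              ring_nf
  -- conclusion
  rw [show maj G s = ∑' m, (‖pcoeff G m‖₊ : ℝ≥0∞) * s ^ m from rfl,
    ENNReal.tsum_eq_iSup_sum]
  refine iSup_le fun t => ?_
  obtain ⟨N, hN⟩ := t.exists_nat_subset_range
  calc ∑ m ∈ t, (‖pcoeff G m‖₊ : ℝ≥0∞) * s ^ m
      ≤ GP (N + 2) := by
        simp only [hGP]
        exact Finset.sum_le_sum_of_subset
          (hN.trans (Finset.range_subset_range.mpr (by omega)))
    _ ≤ ENNReal.ofReal (α * r) := step (N + 2) (by omega) (claim (N + 1))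
end

section
/- Let λ ∈ C be nonzero and not a root of unity, and let F ∈ O_2 be a formal power series. Then there exists a unique formal power series h = I + H with H ∈ O_2 such that (λI + F)∘h = h∘(λI), i.e. h formally conjugates λI + F to its linear part. -/
open scoped ENNReal

section Aux

open PowerSeries Finset

lemma pcoeff_eq (f : PowerSeries ℂ) (k : ℕ) : pcoeff f k = PowerSeries.coeff k f := rfl

lemma aux_coeff_mul_eq_zero {A B : PowerSeries ℂ} {a b n : ℕ}
    (hA : ∀ i < a, pcoeff A i = 0) (hB : ∀ j < b, pcoeff B j = 0) (hn : n < a + b) :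
    pcoeff (A * B) n = 0 := by
  simp only [pcoeff_eq] at *
  rw [PowerSeries.coeff_mul]
  apply Finset.sum_eq_zero
  intro p hp
  rw [Finset.HasAntidiagonal.mem_antidiagonal] at hp
  by_cases h1 : p.1 < a
  · rw [hA _ h1, zero_mul]
  · rw [hB p.2 (by omega), mul_zero]

lemma aux_coeff_pow_eq_zero {g : PowerSeries ℂ} (hg : pcoeff g 0 = 0) (k : ℕ) :
    ∀ n < k, pcoeff (g ^ k) n = 0 := by
  induction k with
  | zero => intro n hn; omega
  | succ k ih =>
    intro n hn
    rw [pow_succ]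
    refine aux_coeff_mul_eq_zero (a := k) (b := 1) ih (fun j hj => ?_) (by omega)
    interval_cases j
    exact hg

lemma aux_coeff_pow_congr {g g' : PowerSeries ℂ} (hg : pcoeff g 0 = 0) (hg' : pcoeff g' 0 = 0)
    {m : ℕ} (hagree : ∀ i < m, pcoeff g i = pcoeff g' i) {k : ℕ} (hk : 2 ≤ k) :
    pcoeff (g ^ k) m = pcoeff (g' ^ k) m := by
  have key : pcoeff ((∑ i ∈ Finset.range k, g ^ i * g' ^ (k - 1 - i)) * (g - g')) m = 0 := by
    refine aux_coeff_mul_eq_zero (a := k - 1) (b := m) ?_ ?_ (by omega)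
    · intro i hi
      simp only [pcoeff_eq, map_sum]
      apply Finset.sum_eq_zero
      intro j hj
      rw [Finset.mem_range] at hj
      exact aux_coeff_mul_eq_zero (a := j) (b := k - 1 - j) (aux_coeff_pow_eq_zero hg j)
        (aux_coeff_pow_eq_zero hg' (k - 1 - j)) (by omega)
    · intro i hi
      simp only [pcoeff_eq, map_sub]
      rw [← pcoeff_eq, ← pcoeff_eq, hagree i hi, sub_self]
  rw [geom_sum₂_mul] at key
  simp only [pcoeff_eq, map_sub, sub_eq_zero] at key
  exact key

lemma pcoeff_pcomp (f g : PowerSeries ℂ) (m : ℕ) :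
    pcoeff (pcomp f g) m = ∑ k ∈ Finset.range (m + 1), pcoeff f k * pcoeff (g ^ k) m := by
  simp [pcomp, pcoeff_eq]

lemma pcoeff_comp_linear (h : PowerSeries ℂ) (l : ℂ) (m : ℕ) :
    pcoeff (pcomp h (l • PowerSeries.X)) m = pcoeff h m * l ^ m := by
  rw [pcoeff_pcomp]
  rw [Finset.sum_eq_single_of_mem m (Finset.self_mem_range_succ m)]
  · simp [pcoeff_eq, smul_pow, PowerSeries.coeff_X_pow]
  · intro k hk hne
    simp [pcoeff_eq, smul_pow, PowerSeries.coeff_X_pow, Ne.symm hne]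

lemma pcoeff_comp_left (l : ℂ) (F h : PowerSeries ℂ) {m : ℕ} (hm : 1 ≤ m) :
    pcoeff (pcomp (l • PowerSeries.X + F) h) m
      = l * pcoeff h m + ∑ k ∈ Finset.range (m + 1), pcoeff F k * pcoeff (h ^ k) m := by
  rw [pcoeff_pcomp]
  have step : ∀ k ∈ Finset.range (m + 1),
      pcoeff (l • PowerSeries.X + F) k * pcoeff (h ^ k) m
        = (if k = 1 then l * pcoeff (h ^ k) m else 0) + pcoeff F k * pcoeff (h ^ k) m := by
    intro k _
    simp only [pcoeff_eq, map_add, map_smul, PowerSeries.coeff_X, smul_eq_mul]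
    by_cases hk : k = 1 <;> simp [hk, add_mul]
  rw [Finset.sum_congr rfl step, Finset.sum_add_distrib, Finset.sum_ite_eq']
  rw [if_pos (Finset.mem_range.mpr (by omega))]
  simp

/-- Characterization of the conjugacy equation coefficientwise. -/
lemma char_eq (l : ℂ) (F : PowerSeries ℂ) (hF : inO 2 F) (h : PowerSeries ℂ)
    (h0 : pcoeff h 0 = 0) (h1 : pcoeff h 1 = 1) :
    pcomp (l • PowerSeries.X + F) h = pcomp h (l • PowerSeries.X) ↔
      ∀ m, 2 ≤ m → (l ^ m - l) * pcoeff h m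
        = ∑ k ∈ Finset.range (m + 1), pcoeff F k * pcoeff (h ^ k) m := by
  have hF0 : pcoeff F 0 = 0 := hF 0 (by omega)
  have hF1 : pcoeff F 1 = 0 := hF 1 (by omega)
  have hF0' : PowerSeries.coeff 0 F = 0 := hF0
  have h0' : PowerSeries.coeff 0 h = 0 := h0
  constructor
  · intro hEq m hm
    have hc : pcoeff (pcomp (l • PowerSeries.X + F) h) m
        = pcoeff (pcomp h (l • PowerSeries.X)) m := by rw [hEq]
    rw [pcoeff_comp_left l F h (by omega), pcoeff_comp_linear] at hc
    linear_combination -hc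
  · intro hC
    ext m
    rw [← pcoeff_eq, ← pcoeff_eq]
    match m, Nat.lt_or_ge m 2 with
    | 0, _ =>
      rw [pcoeff_pcomp, pcoeff_comp_linear]
      simp [pcoeff_eq, hF0', h0']
    | 1, _ =>
      rw [pcoeff_comp_left l F h (by omega), pcoeff_comp_linear]
      have e0 : pcoeff (h ^ 0) 1 = 0 := by simp [pcoeff_eq]
      rw [Finset.sum_range_succ, Finset.sum_range_succ, Finset.sum_range_zero]
      simp [hF0, hF1, h1, e0]
    | (m + 2), _ =>
      rw [pcoeff_comp_left l F h (by omega), pcoeff_comp_linear]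
      have := hC (m + 2) (by omega)
      linear_combination -this

/-- The recursively defined coefficients of the linearizing map. -/
noncomputable def cfun (l : ℂ) (F : PowerSeries ℂ) : ℕ → ℂ
  | 0 => 0
  | 1 => 1
  | (m + 2) =>
    (∑ k ∈ Finset.range (m + 3), pcoeff F k *
        pcoeff ((PowerSeries.mk fun j => if _ : j < m + 2 then cfun l F j else 0) ^ k) (m + 2))
      / (l ^ (m + 2) - l)

lemma sum_congr_lower (F : PowerSeries ℂ) (hF : inO 2 F) (g g' : PowerSeries ℂ)
    (hg : pcoeff g 0 = 0) (hg' : pcoeff g' 0 = 0) (m : ℕ) (hm : 2 ≤ m)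
    (hag : ∀ i < m, pcoeff g i = pcoeff g' i) :
    ∑ k ∈ Finset.range (m + 1), pcoeff F k * pcoeff (g ^ k) m
      = ∑ k ∈ Finset.range (m + 1), pcoeff F k * pcoeff (g' ^ k) m := by
  refine Finset.sum_congr rfl fun k _ => ?_
  match k with
  | 0 => simp [pcoeff_eq, PowerSeries.coeff_one, (by omega : ¬ m = 0)]
  | 1 => rw [hF 1 (by omega)]; ring
  | (k + 2) => rw [aux_coeff_pow_congr hg hg' hag (by omega)]

end Aux

theorem formal_linearization (l : ℂ) (hl : l ≠ 0)
    (hroot : ∀ n : ℕ, 1 ≤ n → l ^ n ≠ 1) (F : PowerSeries ℂ) (hF : inO 2 F) :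
    ∃! H : PowerSeries ℂ, inO 2 H ∧
      pcomp (l • PowerSeries.X + F) (PowerSeries.X + H)
        = pcomp (PowerSeries.X + H) (l • PowerSeries.X) := by
  classical
  set c : ℕ → ℂ := cfun l F with hc
  set h : PowerSeries ℂ := PowerSeries.mk c with hhdef
  have hcoeff : ∀ j, pcoeff h j = c j := fun j => PowerSeries.coeff_mk j c
  have hc0 : c 0 = 0 := by rw [hc, cfun]
  have hc1 : c 1 = 1 := by rw [hc, cfun]
  have h0 : pcoeff h 0 = 0 := by rw [hcoeff, hc0]
  have h1 : pcoeff h 1 = 1 := by rw [hcoeff, hc1]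
  have hden : ∀ m : ℕ, 2 ≤ m → l ^ m - l ≠ 0 := by
    intro m hm hzero
    apply hroot (m - 1) (by omega)
    apply mul_left_cancel₀ hl
    have : l ^ m = l := sub_eq_zero.mp hzero
    calc l * l ^ (m - 1) = l ^ m := by
            rw [← pow_succ']; congr 1; omega
      _ = l * 1 := by rw [this, mul_one]
  have hrec : ∀ m, 2 ≤ m → (l ^ m - l) * pcoeff h m
      = ∑ k ∈ Finset.range (m + 1), pcoeff F k * pcoeff (h ^ k) m := by
    intro m hm
    obtain ⟨n, rfl⟩ : ∃ n, m = n + 2 := ⟨m - 2, by omega⟩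
    set g : PowerSeries ℂ :=
      PowerSeries.mk (fun j => if _ : j < n + 2 then cfun l F j else 0) with hg
    have hgco : ∀ i < n + 2, pcoeff g i = pcoeff h i := by
      intro i hi
      rw [hcoeff, hg, pcoeff_eq, PowerSeries.coeff_mk, dif_pos hi, hc]
    have hg0 : pcoeff g 0 = 0 := by rw [hgco 0 (by omega), h0]
    have hval : c (n + 2) = (∑ k ∈ Finset.range (n + 3), pcoeff F k *
        pcoeff (g ^ k) (n + 2)) / (l ^ (n + 2) - l) := by
      rw [hc]; rw [cfun]
    rw [hcoeff, hval, mul_div_cancel₀ _ (hden (n + 2) (by omega))]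
    exact sum_congr_lower F hF g h hg0 h0 (n + 2) (by omega) hgco
  have hmain : pcomp (l • PowerSeries.X + F) h = pcomp h (l • PowerSeries.X) :=
    (char_eq l F hF h h0 h1).mpr hrec
  refine ⟨h - PowerSeries.X, ⟨?_, ?_⟩, ?_⟩
  · intro i hi
    interval_cases i
    · rw [pcoeff_eq, map_sub, PowerSeries.coeff_X, ← pcoeff_eq, h0]; norm_num
    · rw [pcoeff_eq, map_sub, PowerSeries.coeff_X, ← pcoeff_eq, h1]; norm_num
  · rw [add_sub_cancel]; exact hmain
  · intro H' ⟨hO', hEq'⟩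
    set h' : PowerSeries ℂ := PowerSeries.X + H' with hh'
    have h'0 : pcoeff h' 0 = 0 := by
      rw [hh', pcoeff_eq, map_add, PowerSeries.coeff_X, ← pcoeff_eq, hO' 0 (by omega)]
      simp
    have h'1 : pcoeff h' 1 = 1 := by
      rw [hh', pcoeff_eq, map_add, PowerSeries.coeff_X, ← pcoeff_eq, hO' 1 (by omega)]
      simp
    have hrec' := (char_eq l F hF h' h'0 h'1).mp hEq'
    have key : ∀ m, pcoeff h' m = pcoeff h m := by
      intro m
      induction m using Nat.strong_induction_on with
      | _ m ih =>
        match m with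
        | 0 => rw [h'0, h0]
        | 1 => rw [h'1, h1]
        | (m + 2) =>
          have e1 := hrec' (m + 2) (by omega)
          have e2 := hrec (m + 2) (by omega)
          have eS := sum_congr_lower F hF h' h h'0 h0 (m + 2) (by omega)
            (fun i hi => ih i (by omega))
          exact mul_left_cancel₀ (hden (m + 2) (by omega)) (e1.trans (eS.trans e2.symm))
    have hh : h' = h := PowerSeries.ext fun n => key n
    calc H' = h' - PowerSeries.X := by rw [hh', add_sub_cancel_left]
      _ = h - PowerSeries.X := by rw [hh]
end

section
/- Let λ with |λ| ∉ {0,1}, F ∈ O_2, and set ω = inf_{m≥2} |λ^m − λ|; then ω > 0. If F^(ω^2 r) ≤ αωr for some α ∈ (0, ω^2) and r > 0, then the formal linearizing series H (the unique H ∈ O_2 with H∘(λI) − λH = F∘(I+H)) satisfies H^((ω^2 − α)r) ≤ αr. -/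
open scoped ENNReal

/-- nonneg coefficients closed under powers -/
lemma pow_coeff_nonneg {P : Polynomial ℝ} (hP : ∀ i, 0 ≤ P.coeff i) (k : ℕ) :
    ∀ i, 0 ≤ (P ^ k).coeff i := by
  induction k with
  | zero => intro i; rw [pow_zero, Polynomial.coeff_one]; positivity
  | succ k ih =>
    intro i
    rw [pow_succ, Polynomial.coeff_mul]
    exact Finset.sum_nonneg fun p _ => mul_nonneg (ih p.1) (hP p.2)

lemma pow_orderZero (W : PowerSeries ℂ) (hW : pcoeff W 0 = 0) (k : ℕ) :
    ∀ i < k, pcoeff (W ^ k) i = 0 := by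
  induction k with
  | zero => intro i h; omega
  | succ k ih =>
    intro i hi
    show PowerSeries.coeff i (W ^ k * W) = 0
    rw [PowerSeries.coeff_mul]
    apply Finset.sum_eq_zero
    rintro ⟨a, b⟩ hab
    rw [Finset.HasAntidiagonal.mem_antidiagonal] at hab
    rcases lt_or_ge a k with h | h
    · have := ih a h
      simp only [pcoeff] at this
      rw [this, zero_mul]
    · have hb : b = 0 := by omega
      subst hb
      have := hW
      simp only [pcoeff] at this
      rw [this, mul_zero]

lemma pow_maj (W : PowerSeries ℂ) (P : Polynomial ℝ) (hW0 : pcoeff W 0 = 0)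
    (hPnn : ∀ i, 0 ≤ P.coeff i) (n : ℕ) (hmaj : ∀ j ≤ n, ‖pcoeff W j‖ ≤ P.coeff j) :
    ∀ k, ∀ m ≤ n + k, ‖pcoeff (W ^ (k + 1)) m‖ ≤ (P ^ (k + 1)).coeff m := by
  intro k
  induction k with
  | zero => intro m hm; simpa using hmaj m (by simpa using hm)
  | succ k ih =>
    intro m hm
    have h1 : pcoeff (W ^ (k + 1 + 1)) m
        = ∑ p ∈ Finset.HasAntidiagonal.antidiagonal m, pcoeff (W ^ (k+1)) p.1 * pcoeff W p.2 := by
      simp only [pcoeff, pow_succ (W) (k+1), PowerSeries.coeff_mul]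
    rw [h1, pow_succ (P) (k+1), Polynomial.coeff_mul]
    refine le_trans (norm_sum_le _ _) (Finset.sum_le_sum ?_)
    rintro ⟨a, b⟩ hab
    rw [Finset.HasAntidiagonal.mem_antidiagonal] at hab
    rw [norm_mul]
    rcases Nat.eq_zero_or_pos b with hb | hb
    · subst hb
      rw [hW0, norm_zero, mul_zero]
      exact mul_nonneg (pow_coeff_nonneg hPnn _ _) (hPnn _)
    rcases lt_or_ge a (k + 1) with ha | ha
    · rw [pow_orderZero W hW0 (k+1) a ha, norm_zero, zero_mul]
      exact mul_nonneg (pow_coeff_nonneg hPnn _ _) (hPnn _)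
    · have h2 : a ≤ n + k := by omega
      have h3 : b ≤ n := by omega
      exact mul_le_mul (ih a h2) (hmaj b h3) (norm_nonneg _)
        (pow_coeff_nonneg hPnn _ _)

lemma eval_bound {q : Polynomial ℝ} (hq : ∀ i, 0 ≤ q.coeff i) {s : ℝ} (hs : 0 ≤ s) (M : ℕ) :
    ∑ m ∈ Finset.range M, q.coeff m * s ^ m ≤ q.eval s := by
  have hd : q.natDegree < max M (q.natDegree + 1) := by omega
  rw [Polynomial.eval_eq_sum_range' hd]
  apply Finset.sum_le_sum_of_subset_of_nonneg
  · exact Finset.range_subset_range.mpr (le_max_left _ _)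
  · intro i _ _; exact mul_nonneg (hq i) (pow_nonneg hs i)

lemma ofReal_partial (G : PowerSeries ℂ) {t : ℝ} (ht : 0 ≤ t) (T : Finset ℕ) :
    ENNReal.ofReal (∑ k ∈ T, ‖pcoeff G k‖ * t ^ k)
      = ∑ k ∈ T, (‖pcoeff G k‖₊ : ℝ≥0∞) * (ENNReal.ofReal t) ^ k := by
  rw [ENNReal.ofReal_sum_of_nonneg (fun i _ => mul_nonneg (norm_nonneg _) (pow_nonneg ht _))]
  refine Finset.sum_congr rfl fun k _ => ?_
  rw [ENNReal.ofReal_mul (norm_nonneg _), ENNReal.ofReal_pow ht, ofReal_norm, enorm_eq_nnnorm]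

theorem hyperbolic_maj (l : ℂ) (hl0 : ‖l‖ ≠ 0) (hl1 : ‖l‖ ≠ 1)
    (F : PowerSeries ℂ) (hF : inO 2 F) (ω : ℝ)
    (hω : ω = sInf {x : ℝ | ∃ m : ℕ, 2 ≤ m ∧ x = ‖l ^ m - l‖}) :
    0 < ω ∧
    ∀ (α r : ℝ) (H : PowerSeries ℂ), 0 < r → 0 < α → α < ω ^ 2 → inO 2 H →
      pcomp H (l • PowerSeries.X) - l • H = pcomp F (PowerSeries.X + H) →
      maj F (ENNReal.ofReal (ω ^ 2 * r)) ≤ ENNReal.ofReal (α * ω * r) →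
      maj H (ENNReal.ofReal ((ω ^ 2 - α) * r)) ≤ ENNReal.ofReal (α * r) := by
  -- Part 1: ω > 0 and ω is a lower bound
  have hne : Set.Nonempty {x : ℝ | ∃ m : ℕ, 2 ≤ m ∧ x = ‖l ^ m - l‖} :=
    ⟨‖l ^ 2 - l‖, 2, le_refl 2, rfl⟩
  have hbdd : BddBelow {x : ℝ | ∃ m : ℕ, 2 ≤ m ∧ x = ‖l ^ m - l‖} :=
    ⟨0, by rintro x ⟨m, _, rfl⟩; positivity⟩
  set b := ‖l‖ with hbdef
  have hb0 : 0 < b := lt_of_le_of_ne (norm_nonneg _) (Ne.symm hl0)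
  have key : ∀ m : ℕ, 2 ≤ m → b * |b - 1| ≤ ‖l ^ m - l‖ := by
    intro m hm
    have habs : ‖l ^ m‖ = b ^ m := by rw [norm_pow]
    rcases lt_or_gt_of_ne hl1 with h | h
    · have h1 : b - b ^ m ≤ ‖l ^ m - l‖ := by
        calc b - b ^ m = ‖l‖ - ‖l ^ m‖ := by rw [habs]
        _ ≤ ‖l - l ^ m‖ := by
            have := norm_sub_norm_le (l : ℂ) (l ^ m)
            simpa using this
        _ = ‖l ^ m - l‖ := by rw [norm_sub_rev]
      have h2 : b ^ m ≤ b ^ 2 := pow_le_pow_of_le_one hb0.le h.le hm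
      have : b * |b - 1| = b - b ^ 2 := by
        rw [abs_of_neg (by linarith)]; ring
      linarith
    · have h1 : b ^ m - b ≤ ‖l ^ m - l‖ := by
        calc b ^ m - b = ‖l ^ m‖ - ‖l‖ := by rw [habs]
        _ ≤ ‖l ^ m - l‖ := by
            have := norm_sub_norm_le (l ^ m : ℂ) l
            simpa using this
      have h2 : b ^ 2 ≤ b ^ m := pow_le_pow_right₀ h.le hm
      have : b * |b - 1| = b ^ 2 - b := by
        rw [abs_of_pos (by linarith)]; ring
      linarith
  have hc : 0 < b * |b - 1| := by
    apply mul_pos hb0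
    rw [abs_pos]
    intro h; exact hl1 (by linarith)
  have hωpos : 0 < ω := by
    rw [hω]
    refine lt_of_lt_of_le hc (le_csInf hne ?_)
    rintro x ⟨m, hm, rfl⟩
    exact key m hm
  have hωle : ∀ m : ℕ, 2 ≤ m → ω ≤ ‖l ^ m - l‖ := by
    intro m hm
    rw [hω]
    exact csInf_le hbdd ⟨m, hm, rfl⟩
  refine ⟨hωpos, ?_⟩
  intro α r H hr hα hαω hH2 heq hFmaj
  set a : ℕ → ℝ := fun j => ‖pcoeff H j‖ with ha
  have ha0 : a 0 = 0 := by simp [ha, hH2 0 (by norm_num)]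
  have ha1 : a 1 = 0 := by simp [ha, hH2 1 (by norm_num)]
  set s : ℝ := (ω ^ 2 - α) * r with hsdef
  have hs : 0 < s := mul_pos (by linarith) hr
  have hω2r : (0:ℝ) ≤ ω ^ 2 * r := by positivity
  have hαωr : (0:ℝ) ≤ α * ω * r := by positivity
  -- partial sums of F at ω²r are bounded
  have hFsum : ∀ K : ℕ, ∑ k ∈ Finset.range K, ‖pcoeff F k‖ * (ω ^ 2 * r) ^ k ≤ α * ω * r := by
    intro K
    rw [← ENNReal.ofReal_le_ofReal_iff hαωr, ofReal_partial F hω2r]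
    exact le_trans (ENNReal.sum_le_tsum _) hFmaj
  -- coefficient equation
  have hGeq : ∀ m : ℕ, (l ^ m - l) * pcoeff H m
      = ∑ k ∈ Finset.range (m + 1), pcoeff F k * pcoeff ((PowerSeries.X + H) ^ k) m := by
    intro m
    have h := congrArg (fun f => PowerSeries.coeff m f) heq
    simp only [map_sub] at h
    have hL : PowerSeries.coeff m (pcomp H (l • PowerSeries.X)) = l ^ m * pcoeff H m := by
      show PowerSeries.coeff m (PowerSeries.mk fun m =>
        ∑ k ∈ Finset.range (m + 1), pcoeff H k * pcoeff ((l • PowerSeries.X) ^ k) m) = _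
      rw [PowerSeries.coeff_mk]
      have hterm : ∀ k, pcoeff ((l • PowerSeries.X) ^ k) m
          = l ^ k * (if m = k then 1 else 0) := by
        intro k
        show PowerSeries.coeff m ((l • PowerSeries.X) ^ k) = _
        rw [smul_pow, map_smul, PowerSeries.coeff_X_pow, smul_eq_mul]
      rw [Finset.sum_congr rfl (fun k _ => by rw [hterm k])]
      rw [Finset.sum_eq_single m]
      · simp [mul_comm]
      · intro k _ hk
        simp [Ne.symm hk]
      · intro hm; exact absurd (Finset.self_mem_range_succ m) hm
    have hS : PowerSeries.coeff m (l • H) = l * pcoeff H m := by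
      rw [map_smul, smul_eq_mul]; rfl
    have hR : PowerSeries.coeff m (pcomp F (PowerSeries.X + H))
        = ∑ k ∈ Finset.range (m + 1), pcoeff F k * pcoeff ((PowerSeries.X + H) ^ k) m := by
      show PowerSeries.coeff m (PowerSeries.mk fun m =>
        ∑ k ∈ Finset.range (m + 1), pcoeff F k * pcoeff ((PowerSeries.X + H) ^ k) m) = _
      rw [PowerSeries.coeff_mk]
    simp only [hL, hS, hR] at h
    rw [← h]; ring
  have hXH0 : pcoeff (PowerSeries.X + H) 0 = 0 := by
    show PowerSeries.coeff 0 (PowerSeries.X + H) = 0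
    rw [map_add]
    have h1 : PowerSeries.coeff 0 (PowerSeries.X : PowerSeries ℂ) = 0 := by
      simp [PowerSeries.coeff_zero_eq_constantCoeff]
    have h2 : PowerSeries.coeff 0 H = 0 := hH2 0 (by norm_num)
    rw [h1, h2, add_zero]
  -- main induction
  have main : ∀ N : ℕ, ∑ m ∈ Finset.range (N + 1), a m * s ^ m ≤ α * r := by
    intro N
    induction N using Nat.strong_induction_on with
    | _ N ih =>
    match N with
    | 0 =>
      have h0 : ∑ m ∈ Finset.range (0 + 1), a m * s ^ m = 0 := by
        rw [Finset.sum_range_one, ha0]; ring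
      rw [h0]; positivity
    | (N' + 1) =>
      set P : Polynomial ℝ :=
        Polynomial.X + ∑ j ∈ Finset.range (N' + 1), Polynomial.C (a j) * Polynomial.X ^ j
        with hPdef
      have hPco : ∀ i, P.coeff i
          = (if i = 1 then 1 else 0) + (if i < N' + 1 then a i else 0) := by
        intro i
        rw [hPdef, Polynomial.coeff_add, Polynomial.finset_sum_coeff]
        congr 1
        · rw [Polynomial.coeff_X]
          simp [eq_comm]
        · simp only [Polynomial.coeff_C_mul, Polynomial.coeff_X_pow]
          rw [Finset.sum_congr rfl (fun j _ => by rw [mul_ite, mul_one, mul_zero])]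
          rw [Finset.sum_ite_eq (Finset.range (N' + 1)) i a]
          simp [Finset.mem_range]
      have hPnn : ∀ i, 0 ≤ P.coeff i := by
        intro i
        rw [hPco]
        apply add_nonneg <;> split <;> simp [ha, norm_nonneg]
      have hP0 : pcoeff (PowerSeries.X + H) 0 = 0 := hXH0
      have hmajP : ∀ j ≤ N', ‖pcoeff (PowerSeries.X + H) j‖ ≤ P.coeff j := by
        intro j hj
        have hco : pcoeff (PowerSeries.X + H) j
            = (if j = 1 then 1 else 0) + pcoeff H j := by
          show PowerSeries.coeff j (PowerSeries.X + H) = _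
          rw [map_add, PowerSeries.coeff_X]
          rfl
        rw [hPco, hco]
        by_cases hj1 : j = 1
        · subst hj1
          have : pcoeff H 1 = 0 := hH2 1 (by norm_num)
          simp [this, hj, Nat.lt_succ_of_le hj, ha1]
        · simp only [hj1, if_false, zero_add, if_pos (Nat.lt_succ_of_le hj)]
          exact le_of_eq rfl
      have hPev : P.eval s = s + ∑ j ∈ Finset.range (N' + 1), a j * s ^ j := by
        rw [hPdef]
        simp [Polynomial.eval_finset_sum]
      have hPevle : P.eval s ≤ ω ^ 2 * r := by
        rw [hPev]
        have := ih N' (Nat.lt_succ_self N')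
        have hseq : s = (ω ^ 2 - α) * r := hsdef
        linarith
      have hPevnn : 0 ≤ P.eval s := by
        rw [hPev]
        have : 0 ≤ ∑ j ∈ Finset.range (N' + 1), a j * s ^ j :=
          Finset.sum_nonneg fun j _ => mul_nonneg (norm_nonneg _) (pow_nonneg hs.le _)
        linarith
      -- bound ω * a m for m ≤ N'+1
      have hkey : ∀ m ∈ Finset.range (N' + 2),
          ω * (a m * s ^ m)
            ≤ (∑ k ∈ Finset.range (N' + 2), ‖pcoeff F k‖ * (P ^ k).coeff m) * s ^ m := by
        intro m hm
        rw [Finset.mem_range] at hm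
        have hsum_nn : 0 ≤ ∑ k ∈ Finset.range (N' + 2), ‖pcoeff F k‖ * (P ^ k).coeff m :=
          Finset.sum_nonneg fun k _ =>
            mul_nonneg (norm_nonneg _) (pow_coeff_nonneg hPnn k m)
        rcases lt_or_ge m 2 with hm2 | hm2
        · interval_cases m <;>
            simp only [ha0, ha1, mul_zero, zero_mul, mul_zero] <;>
            exact mul_nonneg hsum_nn (pow_nonneg hs.le _)
        · rw [← mul_assoc]
          apply mul_le_mul_of_nonneg_right _ (pow_nonneg hs.le m)
          have h1 : ω * a m ≤ ‖(l ^ m - l) * pcoeff H m‖ := by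
            rw [norm_mul]
            apply mul_le_mul_of_nonneg_right _ (norm_nonneg _)
            have := hωle m hm2
            simpa using this
          rw [hGeq m] at h1
          refine h1.trans (le_trans (norm_sum_le _ _) ?_)
          have hstep : ∀ k ∈ Finset.range (m + 1),
              ‖pcoeff F k * pcoeff ((PowerSeries.X + H) ^ k) m‖
                ≤ ‖pcoeff F k‖ * (P ^ k).coeff m := by
            intro k hk
            rw [Finset.mem_range] at hk
            rw [norm_mul]
            rcases lt_or_ge k 2 with hk2 | hk2
            · have : pcoeff F k = 0 := hF k hk2
              rw [this, norm_zero, zero_mul, zero_mul]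
            · apply mul_le_mul_of_nonneg_left _ (norm_nonneg _)
              obtain ⟨j, rfl⟩ : ∃ j, k = j + 1 := ⟨k - 1, by omega⟩
              exact pow_maj (PowerSeries.X + H) P hP0 hPnn N' hmajP j m (by omega)
          refine le_trans (Finset.sum_le_sum hstep) ?_
          apply Finset.sum_le_sum_of_subset_of_nonneg
          · exact Finset.range_subset_range.mpr (by omega)
          · intro k _ _
            exact mul_nonneg (norm_nonneg _) (pow_coeff_nonneg hPnn k m)
      -- chain
      have hchain : ω * ∑ m ∈ Finset.range (N' + 2), a m * s ^ m ≤ α * ω * r := by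
        rw [Finset.mul_sum]
        refine le_trans (Finset.sum_le_sum hkey) ?_
        have e1 : ∑ m ∈ Finset.range (N' + 2),
            (∑ k ∈ Finset.range (N' + 2), ‖pcoeff F k‖ * (P ^ k).coeff m) * s ^ m
            = ∑ k ∈ Finset.range (N' + 2), ‖pcoeff F k‖
                * ∑ m ∈ Finset.range (N' + 2), (P ^ k).coeff m * s ^ m := by
          simp_rw [Finset.sum_mul, Finset.mul_sum]
          rw [Finset.sum_comm]
          refine Finset.sum_congr rfl fun k _ => Finset.sum_congr rfl fun m _ => by ring
        rw [e1]
        refine le_trans ?_ (hFsum (N' + 2))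
        apply Finset.sum_le_sum
        intro k _
        apply mul_le_mul_of_nonneg_left _ (norm_nonneg _)
        calc ∑ m ∈ Finset.range (N' + 2), (P ^ k).coeff m * s ^ m
            ≤ (P ^ k).eval s := eval_bound (pow_coeff_nonneg hPnn k) hs.le _
          _ = (P.eval s) ^ k := by rw [Polynomial.eval_pow]
          _ ≤ (ω ^ 2 * r) ^ k := pow_le_pow_left₀ hPevnn hPevle k
      have := hchain
      nlinarith [this]
  -- conclude
  rw [maj, ENNReal.tsum_eq_iSup_sum]
  apply iSup_le
  intro T
  have hsub : T ⊆ Finset.range (T.sup id + 1) := fun k hk =>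
    Finset.mem_range.mpr (Nat.lt_succ_of_le (Finset.le_sup (f := id) hk))
  refine le_trans (Finset.sum_le_sum_of_subset hsub) ?_
  rw [← ofReal_partial H hs.le]
  apply ENNReal.ofReal_le_ofReal
  exact main (T.sup id)
end

section
/- Hyperbolic linearization theorem: if f = λI + F with F ∈ O_2 of positive radius of convergence and |λ| ∉ {0,1}, then the unique formal series h = I + H with h^{-1}∘f∘h = λI has positive radius of convergence. -/
open scoped ENNReal

/-! ### Auxiliary lemmas -/

noncomputable def phi (j : ℕ) : ℝ := if j = 0 then 0 else 1 / (j:ℝ)^2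

lemma phi_nonneg (j : ℕ) : 0 ≤ phi j := by unfold phi; positivity

lemma phi_le_one (j : ℕ) : phi j ≤ 1 := by
  unfold phi
  split
  · norm_num
  · rw [div_le_one (by positivity)]
    have : (1:ℝ) ≤ (j:ℝ) := by
      exact_mod_cast Nat.one_le_iff_ne_zero.mpr (by assumption)
    nlinarith

lemma sum_phi_aux : ∀ n : ℕ, 1 ≤ n → ∑ k ∈ Finset.range (n+1), phi k ≤ 2 - 1/(n:ℝ) := by
  intro n hn
  induction n, hn using Nat.le_induction with
  | base =>
    rw [Finset.sum_range_succ, Finset.sum_range_one]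
    norm_num [phi]
  | succ n hn ih =>
    rw [Finset.sum_range_succ]
    have hφ : phi (n+1) = 1/((n:ℝ)+1)^2 := by
      rw [phi, if_neg (by omega)]; push_cast; ring_nf
    have hn' : (1:ℝ) ≤ (n:ℝ) := by exact_mod_cast hn
    have key : 1/((n:ℝ)+1)^2 ≤ 1/(n:ℝ) - 1/((n:ℝ)+1) := by
      have : (1:ℝ)/(n:ℝ) - 1/((n:ℝ)+1) = 1/((n:ℝ)*((n:ℝ)+1)) := by
        field_simp
        ring
      rw [this, div_le_div_iff₀ (by positivity) (by positivity)]
      nlinarith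
    push_cast
    linarith

lemma sum_phi_le' (n : ℕ) : ∑ k ∈ Finset.range n, phi k ≤ 2 := by
  rcases n with _ | n
  · simp
  rcases Nat.eq_zero_or_pos n with h | h
  · subst h; simp [phi]
  have := sum_phi_aux n h
  have h2 : (0:ℝ) < 1/(n:ℝ) := by positivity
  linarith

lemma phi_mul_le (m k : ℕ) (hm : 1 ≤ m) (hk : k ≤ m) :
    phi k * phi (m - k) ≤ 2/(m:ℝ)^2 * (phi k + phi (m-k)) := by
  rcases Nat.eq_zero_or_pos k with h | h
  · subst h
    have h0 : phi 0 = 0 := by simp [phi]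
    rw [h0, zero_mul]
    exact mul_nonneg (by positivity) (add_nonneg le_rfl (phi_nonneg _))
  rcases Nat.eq_or_lt_of_le hk with h2 | h2
  · subst h2
    have h0 : phi (k - k) = 0 := by simp [phi]
    rw [h0, mul_zero]
    exact mul_nonneg (by positivity) (add_nonneg (phi_nonneg _) le_rfl)
  · have hmk : 1 ≤ m - k := by omega
    have hsum : k + (m - k) = m := by omega
    rw [phi, phi, if_neg (by omega), if_neg (by omega)]
    have ha : (1:ℝ) ≤ (k:ℝ) := by exact_mod_cast h
    have hb : (1:ℝ) ≤ ((m-k:ℕ):ℝ) := by exact_mod_cast hmk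
    have hm' : (m:ℝ) = (k:ℝ) + ((m-k:ℕ):ℝ) := by exact_mod_cast hsum.symm
    set a := (k:ℝ); set b := ((m-k:ℕ):ℝ)
    rw [hm']
    rw [div_add_div _ _ (by positivity) (by positivity), div_mul_div_comm,
      div_mul_div_comm, div_le_div_iff₀ (by positivity) (by positivity)]
    nlinarith [mul_nonneg (mul_nonneg (sq_nonneg a) (sq_nonneg b)) (sq_nonneg (a-b))]

lemma phi_conv (m : ℕ) :
    ∑ p ∈ Finset.HasAntidiagonal.antidiagonal m, phi p.1 * phi p.2 ≤ 16 * phi m := by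
  rcases Nat.eq_zero_or_pos m with h | h
  · subst h; simp [phi]
  rw [Finset.Nat.sum_antidiagonal_eq_sum_range_succ_mk]
  have step : ∀ k ∈ Finset.range (m+1), phi k * phi (m - k) ≤ 2/(m:ℝ)^2 * (phi k + phi (m-k)) := by
    intro k hk
    exact phi_mul_le m k h (by simpa using Nat.lt_succ_iff.mp (Finset.mem_range.mp hk))
  calc ∑ k ∈ Finset.range (m+1), phi k * phi (m - k)
      ≤ ∑ k ∈ Finset.range (m+1), 2/(m:ℝ)^2 * (phi k + phi (m-k)) := Finset.sum_le_sum step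
    _ = 2/(m:ℝ)^2 * (∑ k ∈ Finset.range (m+1), phi k + ∑ k ∈ Finset.range (m+1), phi (m-k)) := by
        rw [← Finset.mul_sum, Finset.sum_add_distrib]
    _ ≤ 2/(m:ℝ)^2 * (2 + 2) := by
        have h1 := sum_phi_le' (m+1)
        have h2 : ∑ k ∈ Finset.range (m+1), phi (m-k) = ∑ k ∈ Finset.range (m+1), phi k := by
          simpa using Finset.sum_range_reflect (fun k => phi k) (m+1)
        rw [h2]
        have h3 : (0:ℝ) ≤ 2/(m:ℝ)^2 := by positivity
        nlinarith
    _ ≤ 16 * phi m := by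
        rw [phi, if_neg (by omega), mul_one_div]
        have he : 2/(m:ℝ)^2*(2+2) = 8/(m:ℝ)^2 := by ring
        rw [he]
        gcongr
        norm_num

lemma coeff_pow_nonneg (b : ℕ → ℝ) (hb : ∀ j, 0 ≤ b j) (k m : ℕ) :
    0 ≤ PowerSeries.coeff m ((PowerSeries.mk b)^k) := by
  induction k generalizing m with
  | zero => rw [pow_zero, PowerSeries.coeff_one]; split <;> norm_num
  | succ k ih =>
    rw [pow_succ', PowerSeries.coeff_mul]
    apply Finset.sum_nonneg
    intro p hp
    exact mul_nonneg (by simpa using hb p.1) (ih p.2)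

lemma norm_coeff_pow_le (f : PowerSeries ℂ) (k m : ℕ) :
    ‖PowerSeries.coeff m (f^k)‖ ≤
      PowerSeries.coeff m ((PowerSeries.mk fun j => ‖PowerSeries.coeff j f‖)^k) := by
  induction k generalizing m with
  | zero =>
    rw [pow_zero, pow_zero, PowerSeries.coeff_one, PowerSeries.coeff_one]
    split <;> simp
  | succ k ih =>
    rw [pow_succ', pow_succ', PowerSeries.coeff_mul, PowerSeries.coeff_mul]
    refine (norm_sum_le _ _).trans (Finset.sum_le_sum ?_)
    intro p hp
    rw [norm_mul, PowerSeries.coeff_mk]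
    exact mul_le_mul_of_nonneg_left (ih p.2) (norm_nonneg _)

lemma pow_coeff_bound (b : ℕ → ℝ) (hb : ∀ j, 0 ≤ b j) (D C : ℝ) (hD : 0 ≤ D) (hC : 0 ≤ C)
    (N : ℕ) (hbd : ∀ j ≤ N, b j ≤ D * C^j * phi j) :
    ∀ k, 1 ≤ k → ∀ m ≤ N, PowerSeries.coeff m ((PowerSeries.mk b)^k)
      ≤ D^k * C^m * 16^(k-1) * phi m := by
  intro k hk
  induction k, hk using Nat.le_induction with
  | base =>
    intro m hm
    rw [pow_one, PowerSeries.coeff_mk]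
    simpa using hbd m hm
  | succ k hk ih =>
    intro m hm
    rw [pow_succ', PowerSeries.coeff_mul]
    have step : ∀ p ∈ Finset.HasAntidiagonal.antidiagonal m,
        PowerSeries.coeff p.1 (PowerSeries.mk b) * PowerSeries.coeff p.2 ((PowerSeries.mk b)^k)
        ≤ (D * C^p.1 * phi p.1) * (D^k * C^p.2 * 16^(k-1) * phi p.2) := by
      intro p hp
      have hp' : p.1 + p.2 = m := Finset.HasAntidiagonal.mem_antidiagonal.mp hp
      rw [PowerSeries.coeff_mk]
      exact mul_le_mul (hbd p.1 (by omega)) (ih p.2 (by omega))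
        (coeff_pow_nonneg b hb k p.2)
        (by have := phi_nonneg p.1; positivity)
    calc _ ≤ ∑ p ∈ Finset.HasAntidiagonal.antidiagonal m,
          (D * C^p.1 * phi p.1) * (D^k * C^p.2 * 16^(k-1) * phi p.2) := Finset.sum_le_sum step
      _ = (D^(k+1) * C^m * 16^(k-1)) * ∑ p ∈ Finset.HasAntidiagonal.antidiagonal m, phi p.1 * phi p.2 := by
          rw [Finset.mul_sum]
          apply Finset.sum_congr rfl
          intro p hp
          have hp' : p.1 + p.2 = m := Finset.HasAntidiagonal.mem_antidiagonal.mp hp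
          rw [← hp', pow_add, pow_succ]
          ring
      _ ≤ (D^(k+1) * C^m * 16^(k-1)) * (16 * phi m) :=
          mul_le_mul_of_nonneg_left (phi_conv m) (by positivity)
      _ = D^(k+1) * C^m * 16^((k+1)-1) * phi m := by
          have h16 : (16:ℝ)^(k-1) * 16 = 16^k := by
            rw [← pow_succ]; congr 1; omega
          have hk1 : (k+1)-1 = k := rfl
          rw [hk1, ← h16]; ring

lemma pow_coeff_bound' (b : ℕ → ℝ) (hb : ∀ j, 0 ≤ b j) (hb0 : b 0 = 0)
    (D C : ℝ) (hD : 0 ≤ D) (hC : 0 ≤ C) (m : ℕ)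
    (hbd : ∀ j < m, b j ≤ D * C^j * phi j) :
    ∀ k, 2 ≤ k → PowerSeries.coeff m ((PowerSeries.mk b)^k)
      ≤ D^k * C^m * 16^(k-1) * phi m := by
  intro k hk
  obtain ⟨k', rfl⟩ : ∃ k', k = k' + 1 := ⟨k - 1, by omega⟩
  have hk' : 1 ≤ k' := by omega
  rw [pow_succ', PowerSeries.coeff_mul]
  have hc0 : ∀ j, 1 ≤ j → PowerSeries.coeff 0 ((PowerSeries.mk b)^j) = 0 := by
    intro j hj
    rw [PowerSeries.coeff_zero_eq_constantCoeff, map_pow]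
    have : PowerSeries.constantCoeff (PowerSeries.mk b) = 0 := by
      rw [← PowerSeries.coeff_zero_eq_constantCoeff, PowerSeries.coeff_mk, hb0]
    rw [this, zero_pow (by omega)]
  have step : ∀ p ∈ Finset.HasAntidiagonal.antidiagonal m,
      PowerSeries.coeff p.1 (PowerSeries.mk b) * PowerSeries.coeff p.2 ((PowerSeries.mk b)^k')
      ≤ (D * C^p.1 * phi p.1) * (D^k' * C^p.2 * 16^(k'-1) * phi p.2) := by
    intro p hp
    have hp' : p.1 + p.2 = m := Finset.HasAntidiagonal.mem_antidiagonal.mp hp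
    rw [PowerSeries.coeff_mk]
    rcases Nat.eq_zero_or_pos p.1 with h1 | h1
    · rw [h1, hb0, zero_mul]
      exact mul_nonneg (mul_nonneg (mul_nonneg hD (pow_nonneg hC _)) (phi_nonneg _))
        (mul_nonneg (mul_nonneg (mul_nonneg (pow_nonneg hD _) (pow_nonneg hC _))
          (pow_nonneg (by norm_num) _)) (phi_nonneg _))
    rcases Nat.eq_zero_or_pos p.2 with h2 | h2
    · rw [h2, hc0 k' hk', mul_zero, show phi 0 = (0:ℝ) from by simp [phi], mul_zero, mul_zero]
    have hlt : p.1 < m := by omega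
    exact mul_le_mul (hbd p.1 hlt)
      (pow_coeff_bound b hb D C hD hC (m-1) (fun j hj => hbd j (by omega)) k' hk' p.2 (by omega))
      (coeff_pow_nonneg b hb k' p.2)
      (by have := phi_nonneg p.1; positivity)
  calc _ ≤ ∑ p ∈ Finset.HasAntidiagonal.antidiagonal m,
        (D * C^p.1 * phi p.1) * (D^k' * C^p.2 * 16^(k'-1) * phi p.2) := Finset.sum_le_sum step
    _ = (D^(k'+1) * C^m * 16^(k'-1)) * ∑ p ∈ Finset.HasAntidiagonal.antidiagonal m, phi p.1 * phi p.2 := by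
        rw [Finset.mul_sum]
        apply Finset.sum_congr rfl
        intro p hp
        have hp' : p.1 + p.2 = m := Finset.HasAntidiagonal.mem_antidiagonal.mp hp
        rw [← hp', pow_add, pow_succ]
        ring
    _ ≤ (D^(k'+1) * C^m * 16^(k'-1)) * (16 * phi m) :=
        mul_le_mul_of_nonneg_left (phi_conv m) (by positivity)
    _ = D^(k'+1) * C^m * 16^((k'+1)-1) * phi m := by
        have h16 : (16:ℝ)^(k'-1) * 16 = 16^k' := by
          rw [← pow_succ]; congr 1; omega
        have hk1 : (k'+1)-1 = k' := rfl
        rw [hk1, ← h16]; ring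

lemma scalar_eq (A r D Cv ph : ℝ) (k : ℕ) (hk : 1 ≤ k) (hr : r ≠ 0) :
    A / r^k * (D^k * Cv * 16^(k-1) * ph) = A/16 * (Cv * ph) * (16*D/r)^k := by
  have h16 : (16:ℝ)^k = 16 * 16^(k-1) := by
    rw [← pow_succ']; congr 1; omega
  rw [div_pow, mul_pow, h16]
  field_simp

lemma conj_recursion (l : ℂ) (F H : PowerSeries ℂ)
    (hconj : pcomp (l • PowerSeries.X + F) (PowerSeries.X + H)
      = pcomp (PowerSeries.X + H) (l • PowerSeries.X)) (m : ℕ) (hm : 2 ≤ m) :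
    (l^m - l) * PowerSeries.coeff m (PowerSeries.X + H)
      = ∑ k ∈ Finset.range (m+1), pcoeff F k
          * PowerSeries.coeff m ((PowerSeries.X + H)^k) := by
  have h := congrArg (PowerSeries.coeff m) hconj
  rw [pcomp, pcomp, PowerSeries.coeff_mk, PowerSeries.coeff_mk] at h
  have hR : ∑ k ∈ Finset.range (m+1), pcoeff (PowerSeries.X + H) k
      * pcoeff ((l • PowerSeries.X) ^ k) m = l^m * PowerSeries.coeff m (PowerSeries.X + H) := by
    rw [Finset.sum_eq_single m]
    · simp only [pcoeff, smul_pow, PowerSeries.coeff_smul, PowerSeries.coeff_X_pow,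
        if_pos rfl, smul_eq_mul, mul_one]
      norm_num
      ring
    · intro k hk hne
      simp only [pcoeff, smul_pow, PowerSeries.coeff_smul, PowerSeries.coeff_X_pow,
        if_neg (Ne.symm hne), smul_eq_mul, mul_zero]
    · intro hm'; exact absurd (Finset.self_mem_range_succ m) hm'
  have hL : ∑ k ∈ Finset.range (m+1), pcoeff (l • PowerSeries.X + F) k
      * pcoeff ((PowerSeries.X + H) ^ k) m
      = l * PowerSeries.coeff m (PowerSeries.X + H)
        + ∑ k ∈ Finset.range (m+1), pcoeff F k * PowerSeries.coeff m ((PowerSeries.X + H)^k) := by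
    have hsplit : ∀ k, pcoeff (l • PowerSeries.X + F) k
        = (if k = 1 then l else 0) + pcoeff F k := by
      intro k
      rw [pcoeff, map_add, PowerSeries.coeff_smul, PowerSeries.coeff_X, smul_eq_mul, pcoeff]
      split <;> simp
    calc ∑ k ∈ Finset.range (m+1), pcoeff (l • PowerSeries.X + F) k
          * pcoeff ((PowerSeries.X + H) ^ k) m
        = ∑ k ∈ Finset.range (m+1), ((if k = 1 then l else 0) * pcoeff ((PowerSeries.X + H) ^ k) m
            + pcoeff F k * pcoeff ((PowerSeries.X + H) ^ k) m) := by
          apply Finset.sum_congr rfl; intro k _; rw [hsplit, add_mul]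
      _ = _ := by
          rw [Finset.sum_add_distrib]
          congr 1
          simp only [ite_mul, zero_mul]
          rw [Finset.sum_ite_eq' (Finset.range (m+1)) 1
            (fun k => l * pcoeff ((PowerSeries.X + H) ^ k) m)]
          rw [if_pos (Finset.mem_range.mpr (by omega)), pow_one]
          rfl
  rw [hR, hL] at h
  linear_combination -h

lemma lam_bound (l : ℂ) (m : ℕ) (hm : 2 ≤ m) :
    ‖l‖ * |‖l‖ - 1| ≤ ‖l^m - l‖ := by
  set t := ‖l‖ with ht
  have ht0 : 0 ≤ t := norm_nonneg l
  have key : |t^m - t| ≤ ‖l^m - l‖ := by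
    have h1 : ‖l^m‖ = t^m := by simp [norm_pow, ht]
    have h2 : ‖l‖ = t := rfl
    calc |t^m - t| = |‖l^m‖ - ‖l‖| := by rw [h1, h2]
      _ ≤ ‖l^m - l‖ := abs_norm_sub_norm_le _ _
  refine le_trans ?_ key
  have hfact : t^m - t = t * (t^(m-1) - 1) := by
    rw [mul_sub, mul_one, ← pow_succ']
    congr 2
    omega
  rw [hfact, abs_mul, abs_of_nonneg ht0]
  apply mul_le_mul_of_nonneg_left _ ht0
  rcases le_total t 1 with h | h
  · have : t^(m-1) ≤ t := by
      calc t^(m-1) ≤ t^1 := pow_le_pow_of_le_one ht0 h (by omega)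
        _ = t := pow_one t
    rw [abs_of_nonpos (by linarith), abs_of_nonpos (by linarith)]
    linarith
  · have : t ≤ t^(m-1) := by
      calc t = t^1 := (pow_one t).symm
        _ ≤ t^(m-1) := pow_le_pow_right₀ h (by omega)
    rw [abs_of_nonneg (by linarith), abs_of_nonneg (by linarith)]
    linarith

lemma geom_tail (v : ℝ) (hv0 : 0 ≤ v) (hv : v ≤ 1/2) :
    ∀ n, 2 ≤ n → ∑ k ∈ Finset.range n, (if k ≤ 1 then 0 else v^k) ≤ 2*v^2 - 2*v^n := by
  intro n hn
  induction n, hn using Nat.le_induction with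
  | base =>
    rw [Finset.sum_range_succ, Finset.sum_range_one]
    norm_num
  | succ n hn ih =>
    rw [Finset.sum_range_succ, if_neg (by omega)]
    have h1 : v^(n+1) ≤ (1/2) * v^n := by
      rw [pow_succ, mul_comm]
      exact mul_le_mul_of_nonneg_right hv (pow_nonneg hv0 n)
    nlinarith [pow_nonneg hv0 n]

lemma geom_tail' (v : ℝ) (hv0 : 0 ≤ v) (hv : v ≤ 1/2) (n : ℕ) (hn : 2 ≤ n) :
    ∑ k ∈ Finset.range n, (if k ≤ 1 then 0 else v^k) ≤ 2*v^2 := by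
  have := geom_tail v hv0 hv n hn
  nlinarith [pow_nonneg hv0 n]

theorem hyperbolic_linearization (l : ℂ) (hl0 : ‖l‖ ≠ 0)
    (hl1 : ‖l‖ ≠ 1) (F H : PowerSeries ℂ) (hF : inO 2 F)
    (hFrad : posRadius F) (hH : inO 2 H)
    (hconj : pcomp (l • PowerSeries.X + F) (PowerSeries.X + H)
      = pcomp (PowerSeries.X + H) (l • PowerSeries.X)) :
    posRadius (PowerSeries.X + H) := by
  classical
  obtain ⟨r, hr, hsum⟩ := hFrad
  set A : ℝ := max 1 (∑' k, ‖pcoeff F k‖ * r^k) with hA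
  have hA1 : (1:ℝ) ≤ A := le_max_left _ _
  have hA0 : (0:ℝ) < A := lt_of_lt_of_le one_pos hA1
  have hFk : ∀ k, ‖pcoeff F k‖ ≤ A / r^k := by
    intro k
    have h1 : ‖pcoeff F k‖ * r^k ≤ ∑' k, ‖pcoeff F k‖ * r^k :=
      hsum.le_tsum k (fun i _ => mul_nonneg (norm_nonneg _) (pow_nonneg hr.le _))
    rw [le_div_iff₀ (pow_pos hr k)]
    exact h1.trans (le_max_right _ _)
  set c : ℝ := ‖l‖ * |‖l‖ - 1| with hc
  have hc0 : (0:ℝ) < c := by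
    apply mul_pos
    · exact lt_of_le_of_ne (norm_nonneg l) (Ne.symm hl0)
    · exact abs_pos.mpr (sub_ne_zero.mpr hl1)
  set D : ℝ := min (r/32) (c*r^2/(32*A)) with hD
  have hD0 : (0:ℝ) < D := lt_min (by positivity) (by positivity)
  set C : ℝ := 1/D with hC
  have hC0 : (0:ℝ) < C := by positivity
  set b : ℕ → ℝ := fun m => ‖PowerSeries.coeff m (PowerSeries.X + H)‖ with hb
  have hbnn : ∀ j, 0 ≤ b j := fun j => norm_nonneg _
  have hb0 : b 0 = 0 := by
    have h1 : pcoeff H 0 = 0 := hH 0 (by omega)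
    rw [pcoeff] at h1
    simp [hb, h1]
  have hb1 : b 1 = 1 := by
    have h1 : pcoeff H 1 = 0 := hH 1 (by omega)
    rw [pcoeff] at h1
    simp [hb, h1]
  -- main induction
  have main : ∀ m, b m ≤ D * C^m * phi m := by
    intro m
    induction m using Nat.strong_induction_on with
    | _ m ih =>
    match m, ih with
    | 0, _ => rw [hb0, show phi 0 = (0:ℝ) from by simp [phi], mul_zero]
    | 1, _ =>
      rw [hb1, show phi 1 = (1:ℝ) from by norm_num [phi], mul_one, pow_one, hC,
        mul_one_div, div_self (ne_of_gt hD0)]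
    | (m+2), ih =>
      set m' := m + 2 with hm'
      have hm2 : 2 ≤ m' := by omega
      have hrec := conj_recursion l F H hconj m' hm2
      -- termwise bound
      have hterm : ∀ k ∈ Finset.range (m'+1),
          ‖pcoeff F k * PowerSeries.coeff m' ((PowerSeries.X + H)^k)‖
          ≤ (A/16) * (C^m' * phi m') * (if k ≤ 1 then 0 else (16*D/r)^k) := by
        intro k hk
        rcases le_or_gt k 1 with h1 | h1
        · rw [if_pos h1, mul_zero]
          have : pcoeff F k = 0 := hF k (by omega)
          rw [this, zero_mul, norm_zero]
        · rw [if_neg (by omega)]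
          have hk2 : 2 ≤ k := h1
          rw [norm_mul]
          have hB : ‖PowerSeries.coeff m' ((PowerSeries.X + H)^k)‖
              ≤ D^k * C^m' * 16^(k-1) * phi m' := by
            refine (norm_coeff_pow_le _ k m').trans ?_
            exact pow_coeff_bound' b hbnn hb0 D C hD0.le hC0.le m'
              (fun j hj => ih j hj) k hk2
          have := mul_le_mul (hFk k) hB (norm_nonneg _) (by positivity)
          refine this.trans (le_of_eq ?_)
          exact scalar_eq A r D (C^m') (phi m') k (by omega) (ne_of_gt hr)
      -- sum bound
      have hsumb : ‖∑ k ∈ Finset.range (m'+1), pcoeff F k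
          * PowerSeries.coeff m' ((PowerSeries.X + H)^k)‖
          ≤ (A/16) * (C^m' * phi m') * (2 * (16*D/r)^2) := by
        refine (norm_sum_le _ _).trans ?_
        refine (Finset.sum_le_sum hterm).trans ?_
        rw [← Finset.mul_sum]
        apply mul_le_mul_of_nonneg_left _ (by have := phi_nonneg m'; positivity)
        have hv0 : (0:ℝ) ≤ 16*D/r := by positivity
        have hv : 16*D/r ≤ 1/2 := by
          rw [div_le_div_iff₀ hr (by norm_num)]
          have : D ≤ r/32 := min_le_left _ _
          nlinarith
        exact geom_tail' _ hv0 hv (m'+1) (by omega)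
      -- conclude
      have hlam := lam_bound l m' hm2
      have hnorm : c * b m' ≤ (A/16) * (C^m' * phi m') * (2 * (16*D/r)^2) := by
        calc c * b m' ≤ ‖l^m' - l‖ * b m' :=
              mul_le_mul_of_nonneg_right hlam (hbnn m')
          _ = ‖(l^m' - l) * PowerSeries.coeff m' (PowerSeries.X + H)‖ := by
              rw [norm_mul]
          _ = ‖∑ k ∈ Finset.range (m'+1), pcoeff F k
              * PowerSeries.coeff m' ((PowerSeries.X + H)^k)‖ := by rw [hrec]
          _ ≤ _ := hsumb
      -- (A/16) * 2 * (16 D / r)^2 ≤ c * D  since D ≤ c r^2/(32 A)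
      have hfinal : (A/16) * (2 * (16*D/r)^2) ≤ c * D := by
        have hDle : D ≤ c*r^2/(32*A) := min_le_right _ _
        rw [div_pow, mul_pow]
        rw [le_div_iff₀ (by positivity)] at hDle
        have h2 : (A/16) * (2 * (16^2 * D^2 / r^2)) = 32 * A * D^2 / r^2 := by
          field_simp; ring
        rw [h2, div_le_iff₀ (by positivity)]
        nlinarith
      have hphinn : 0 ≤ phi m' := phi_nonneg m'
      have : c * b m' ≤ c * (D * C^m' * phi m') := by
        calc c * b m' ≤ (A/16) * (C^m' * phi m') * (2 * (16*D/r)^2) := hnorm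
          _ = ((A/16) * (2 * (16*D/r)^2)) * (C^m' * phi m') := by ring
          _ ≤ (c * D) * (C^m' * phi m') :=
              mul_le_mul_of_nonneg_right hfinal (by positivity)
          _ = c * (D * C^m' * phi m') := by ring
      exact le_of_mul_le_mul_left this hc0
  -- conclude summability
  refine ⟨D/2, by positivity, ?_⟩
  refine Summable.of_nonneg_of_le
    (fun m => mul_nonneg (norm_nonneg _) (pow_nonneg (by positivity) m))
    (fun m => ?_)
    ((summable_geometric_of_lt_one (r := (1/2:ℝ)) (by norm_num) (by norm_num)).mul_left D)
  have h1 : C^m * (D/2)^m = (1/2:ℝ)^m := by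
    rw [← mul_pow]
    congr 1
    rw [hC]
    field_simp
  calc ‖pcoeff (PowerSeries.X + H) m‖ * (D/2)^m
      ≤ (D * C^m * phi m) * (D/2)^m :=
        mul_le_mul_of_nonneg_right (main m) (by positivity)
    _ = D * phi m * (C^m * (D/2)^m) := by ring
    _ = D * phi m * (1/2)^m := by rw [h1]
    _ ≤ D * 1 * (1/2)^m := by
        apply mul_le_mul_of_nonneg_right _ (by positivity)
        exact mul_le_mul_of_nonneg_left (phi_le_one m) hD0.le
    _ = D * (1/2)^m := by rw [mul_one]
end

section
/- If |λ| = 1 and λ is not a root of unity, F ∈ O_{m+1} with m ≥ 1, and P = [L_λ^{-1}F]_{2m} (or any series congruent to L_λ^{-1}F modulo O_{2m+1}), then (I+P)^{-1}∘(λI+F)∘(I+P) − λI ∈ O_{2m+1}. -/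
open scoped ENNReal

open PowerSeries in
lemma coeff_pcomp (f g : PowerSeries ℂ) (i : ℕ) :
    PowerSeries.coeff i (pcomp f g)
      = ∑ k ∈ Finset.range (i + 1),
          PowerSeries.coeff k f * PowerSeries.coeff i (g ^ k) := by
  simp [pcomp, pcoeff]

open PowerSeries in
lemma inO_iff {n : ℕ} {f : PowerSeries ℂ} : inO n f ↔ (X : PowerSeries ℂ) ^ n ∣ f := by
  rw [X_pow_dvd_iff]
  simp [inO, pcoeff]

open PowerSeries in
lemma rescale_X' (l : ℂ) : rescale l (X : PowerSeries ℂ) = l • X := by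
  ext n
  simp only [coeff_rescale, coeff_X, map_smul, smul_eq_mul]
  split_ifs with h
  · subst h; ring
  · ring

open PowerSeries in
lemma pcomp_smulX (H : PowerSeries ℂ) (l : ℂ) : pcomp H (l • X) = rescale l H := by
  ext i
  rw [coeff_pcomp, coeff_rescale]
  have hc : ∀ k : ℕ, PowerSeries.coeff i ((l • X : PowerSeries ℂ) ^ k)
      = if i = k then l ^ k else 0 := by
    intro k
    rw [smul_pow, map_smul, coeff_X_pow, smul_eq_mul]
    split_ifs with h
    · ring
    · ring
  calc ∑ k ∈ Finset.range (i + 1),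
        PowerSeries.coeff k H * PowerSeries.coeff i ((l • X : PowerSeries ℂ) ^ k)
      = ∑ k ∈ Finset.range (i + 1),
        (if i = k then PowerSeries.coeff k H * l ^ k else 0) := by
        apply Finset.sum_congr rfl
        intro k _
        rw [hc k]
        split_ifs <;> ring
    _ = PowerSeries.coeff i H * l ^ i := by
        rw [Finset.sum_ite_eq (Finset.range (i + 1)) i fun k => PowerSeries.coeff k H * l ^ k]
        simp
    _ = l ^ i * PowerSeries.coeff i H := by ring

open PowerSeries in
lemma pcomp_rescale (Q B : PowerSeries ℂ) (l : ℂ) :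
    pcomp Q (rescale l B) = rescale l (pcomp Q B) := by
  ext i
  rw [coeff_pcomp, coeff_rescale, coeff_pcomp, Finset.mul_sum]
  apply Finset.sum_congr rfl
  intro k _
  rw [← map_pow, coeff_rescale]
  ring

open PowerSeries in
lemma pcomp_congr {n : ℕ} {Q C D : PowerSeries ℂ} (h : inO n (C - D)) :
    inO n (pcomp Q C - pcomp Q D) := by
  rw [inO_iff] at h ⊢
  rw [X_pow_dvd_iff]
  intro i hi
  rw [map_sub, coeff_pcomp, coeff_pcomp, ← Finset.sum_sub_distrib]
  apply Finset.sum_eq_zero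
  intro k _
  rw [← mul_sub, ← map_sub]
  have hdvd : (X : PowerSeries ℂ) ^ n ∣ C ^ k - D ^ k :=
    dvd_trans h (sub_dvd_pow_sub_pow C D k)
  rw [X_pow_dvd_iff] at hdvd
  rw [hdvd i hi, mul_zero]

open PowerSeries in
lemma pow_diff_dvd {P : PowerSeries ℂ} {m : ℕ} (hP : (X : PowerSeries ℂ) ^ (m + 1) ∣ P) :
    ∀ k : ℕ, (X : PowerSeries ℂ) ^ (k + m) ∣ ((X + P) ^ k - X ^ k) := by
  intro k
  induction k with
  | zero => simp
  | succ k ih =>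
      have heq : (X + P) ^ (k + 1) - X ^ (k + 1)
          = (X + P) * ((X + P) ^ k - X ^ k) + X ^ k * P := by ring
      rw [heq]
      apply dvd_add
      · have h1 : (X : PowerSeries ℂ) ∣ X + P := by
          apply dvd_add dvd_rfl
          exact dvd_trans (dvd_pow_self _ (Nat.succ_ne_zero m)) hP
        have h2 : (X : PowerSeries ℂ) ^ (k + 1 + m) = X * X ^ (k + m) := by ring
        rw [h2]
        exact mul_dvd_mul h1 ih
      · have h2 : (X : PowerSeries ℂ) ^ (k + 1 + m) = X ^ k * X ^ (m + 1) := by ring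
        rw [h2]
        exact mul_dvd_mul dvd_rfl hP

theorem elliptic_step (l : ℂ) (hl : ‖l‖ = 1)
    (hroot : ∀ n : ℕ, 1 ≤ n → l ^ n ≠ 1) (m : ℕ) (hm : 1 ≤ m)
    (F P Q : PowerSeries ℂ) (hF : inO (m + 1) F)
    (hP : inO (m + 1) P) (hPF : inO (2 * m + 1) (Lop l P - F))
    (hQ1 : pcomp (PowerSeries.X + P) Q = PowerSeries.X)
    (hQ2 : pcomp Q (PowerSeries.X + P) = PowerSeries.X) :
    inO (2 * m + 1)
      (pcomp Q (pcomp (l • PowerSeries.X + F) (PowerSeries.X + P))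
        - l • PowerSeries.X) := by
  classical
  have hQD : pcomp Q (PowerSeries.rescale l (PowerSeries.X + P)) = l • PowerSeries.X := by
    rw [pcomp_rescale, hQ2, rescale_X']
  have hPd : (PowerSeries.X : PowerSeries ℂ) ^ (m + 1) ∣ P := inO_iff.mp hP
  have hcF : ∀ k, k < m + 1 → PowerSeries.coeff k F = 0 := fun k hk => hF k hk
  have key : inO (2 * m + 1)
      (pcomp (l • PowerSeries.X + F) (PowerSeries.X + P)
        - PowerSeries.rescale l (PowerSeries.X + P)) := by
    intro i hi
    have hXP : ∀ k ∈ Finset.range (i + 1),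
        PowerSeries.coeff k (l • PowerSeries.X + F)
          * PowerSeries.coeff i ((PowerSeries.X + P) ^ k)
        = (if k = 1 then l else 0) * PowerSeries.coeff i (PowerSeries.X + P)
          + PowerSeries.coeff k F * (if i = k then 1 else 0) := by
      intro k _
      rw [map_add, map_smul, PowerSeries.coeff_X, smul_eq_mul]
      have hsplit : (l * if k = 1 then 1 else 0) = (if k = 1 then l else 0) := by
        split_ifs <;> ring
      rw [hsplit, add_mul]
      congr 1
      · split_ifs with h
        · subst h; rw [pow_one]
        · ring
      · by_cases hFk : PowerSeries.coeff k F = 0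
        · rw [hFk]; ring
        · have hk' : m + 1 ≤ k := by
            by_contra hc
            exact hFk (hcF k (not_le.mp hc))
          have hlt : i < k + m := by omega
          have hdvd := pow_diff_dvd hPd k
          rw [PowerSeries.X_pow_dvd_iff] at hdvd
          have hco : PowerSeries.coeff i ((PowerSeries.X + P) ^ k)
              = PowerSeries.coeff i ((PowerSeries.X : PowerSeries ℂ) ^ k) := by
            have h0 := hdvd i hlt
            rw [map_sub] at h0
            linear_combination h0
          rw [hco, PowerSeries.coeff_X_pow]
    show PowerSeries.coeff i _ = 0
    rw [map_sub, coeff_pcomp, Finset.sum_congr rfl hXP, Finset.sum_add_distrib]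
    have h1 : ∑ k ∈ Finset.range (i + 1),
        (if k = 1 then l else 0) * PowerSeries.coeff i (PowerSeries.X + P)
        = (if 1 ≤ i then l * PowerSeries.coeff i (PowerSeries.X + P) else 0) := by
      rw [← Finset.sum_mul,
        Finset.sum_ite_eq' (Finset.range (i + 1)) 1 (fun _ => l)]
      by_cases h : 1 ≤ i
      · rw [if_pos (Finset.mem_range.mpr (by omega)), if_pos h]
      · rw [if_neg (by rw [Finset.mem_range]; omega), if_neg h, zero_mul]
    have h2 : ∑ k ∈ Finset.range (i + 1),
        PowerSeries.coeff k F * (if i = k then 1 else 0)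
        = PowerSeries.coeff i F := by
      have hterm : ∀ k ∈ Finset.range (i + 1),
          PowerSeries.coeff k F * (if i = k then 1 else 0)
          = if i = k then PowerSeries.coeff k F else 0 := by
        intro k _
        split_ifs <;> ring
      rw [Finset.sum_congr rfl hterm,
        Finset.sum_ite_eq (Finset.range (i + 1)) i (fun k => PowerSeries.coeff k F)]
      simp
    rw [h1, h2, PowerSeries.coeff_rescale]
    have hPFi : l ^ i * PowerSeries.coeff i P - l * PowerSeries.coeff i P
        - PowerSeries.coeff i F = 0 := by
      have h0 := hPF i hi
      unfold Lop at h0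
      have h3 : pcoeff (pcomp P (l • PowerSeries.X) - l • P - F) i
          = l ^ i * PowerSeries.coeff i P - l * PowerSeries.coeff i P
            - PowerSeries.coeff i F := by
        unfold pcoeff
        rw [map_sub, map_sub, pcomp_smulX, PowerSeries.coeff_rescale, map_smul, smul_eq_mul]
      rw [← h3]
      exact h0
    simp only [map_add, PowerSeries.coeff_X]
    by_cases h : 1 ≤ i
    · rw [if_pos h]
      by_cases h1i : i = 1
      · subst h1i
        simp only [if_pos rfl]
        linear_combination -hPFi
      · rw [if_neg h1i]
        linear_combination -hPFi
    · have hi0 : i = 0 := by omega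
      subst hi0
      rw [if_neg h, if_neg (by norm_num : ¬ ((0:ℕ) = 1))]
      have hF0 : PowerSeries.coeff 0 F = 0 := hcF 0 (by omega)
      have hP0 : PowerSeries.coeff 0 P = 0 := hP 0 (by omega)
      rw [hF0, hP0]
      ring
  have hfin := pcomp_congr (Q := Q) key
  rw [hQD] at hfin
  exact hfin
end

section
/- Let λ be not a root of unity, Ω_n = min_{1≤ℓ≤n}|λ^ℓ − 1|, and F_k ∈ O_{1+2^k} a formal series. Then the polynomial P_k = [L_λ^{-1}F_k]_{2^{k+1}} satisfies the majorant bound P_k^(r) ≤ Ω_{2^{k+1}}^{-1} · F_k^(r) for all r ≥ 0. -/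
open scoped ENNReal

theorem Pk_maj_bound (l : ℂ) (hl : ‖l‖ = 1)
    (hroot : ∀ n : ℕ, 1 ≤ n → l ^ n ≠ 1) (k : ℕ) (F : PowerSeries ℂ)
    (hF : inO (1 + 2 ^ k) F) (Ω : ℝ)
    (hΩ : Ω = sInf {x : ℝ | ∃ ℓ : ℕ, 1 ≤ ℓ ∧ ℓ ≤ 2 ^ (k + 1) ∧
      x = ‖l ^ ℓ - 1‖}) :
    ∀ r : ℝ≥0∞,
      maj (ptrunc (2 ^ (k + 1)) (PowerSeries.mk fun i => pcoeff F i / (l ^ i - l))) r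
        ≤ (ENNReal.ofReal Ω)⁻¹ * maj F r := by

  have hSet : {x : ℝ | ∃ ℓ : ℕ, 1 ≤ ℓ ∧ ℓ ≤ 2 ^ (k + 1) ∧
      x = ‖l ^ ℓ - 1‖}
      = ↑((Finset.Icc 1 (2 ^ (k + 1))).image fun ℓ => ‖l ^ ℓ - 1‖) := by
    ext x
    simp only [Set.mem_setOf_eq, Finset.coe_image, Set.mem_image, Finset.mem_coe,
      Finset.mem_Icc]
    constructor
    · rintro ⟨ℓ, h1, h2, h3⟩; exact ⟨ℓ, ⟨h1, h2⟩, h3.symm⟩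
    · rintro ⟨ℓ, ⟨h1, h2⟩, h3⟩; exact ⟨ℓ, h1, h2, h3.symm⟩
  have hne : ((Finset.Icc 1 (2 ^ (k + 1))).image
      fun ℓ => ‖l ^ ℓ - 1‖).Nonempty :=
    Finset.Nonempty.image ⟨1, by simp [Nat.one_le_two_pow]⟩ _
  have hΩmem : Ω ∈ ((Finset.Icc 1 (2 ^ (k + 1))).image
      fun ℓ => ‖l ^ ℓ - 1‖) := by
    rw [hΩ, hSet]
    exact Finset.Nonempty.csInf_mem hne
  have hΩpos : 0 < Ω := by
    rcases Finset.mem_image.mp hΩmem with ⟨ℓ, hℓ, hx⟩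
    rcases Finset.mem_Icc.mp hℓ with ⟨h1, _⟩
    rw [← hx]
    have : l ^ ℓ - 1 ≠ 0 := sub_ne_zero.mpr (hroot ℓ h1)
    simpa using this
  have hΩle : ∀ ℓ : ℕ, 1 ≤ ℓ → ℓ ≤ 2 ^ (k + 1) → Ω ≤ ‖l ^ ℓ - 1‖ := by
    intro ℓ h1 h2
    rw [hΩ]
    apply csInf_le
    · rw [hSet]; exact Finset.bddBelow _
    · exact ⟨ℓ, h1, h2, rfl⟩
  intro r
  rw [maj, maj, ← ENNReal.tsum_mul_left]
  refine ENNReal.tsum_le_tsum fun i => ?_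
  rw [← mul_assoc]
  gcongr
  simp only [ptrunc, pcoeff, PowerSeries.coeff_mk]
  by_cases hi : i ≤ 2 ^ (k + 1)
  · simp only [hi, if_true]
    by_cases hz : PowerSeries.coeff i F = 0
    · simp [hz]
    · have h2k : 1 ≤ 2 ^ k := Nat.one_le_two_pow
      have hik : 1 + 2 ^ k ≤ i := by
        by_contra h
        exact hz (hF i (by omega))
      have hd : l ^ i - l = l * (l ^ (i - 1) - 1) := by
        rw [mul_sub, mul_one]
        congr 1
        rw [← pow_succ']
        congr 1
        omega
      have habs : ‖l ^ i - l‖ = ‖l ^ (i - 1) - 1‖ := by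
        rw [hd, norm_mul, hl, one_mul]
      have hle : Ω ≤ ‖l ^ i - l‖ := by
        rw [habs]
        exact hΩle (i - 1) (by omega) (by omega)
      have hc : (0 : ℝ) < ‖l ^ i - l‖ := lt_of_lt_of_le hΩpos hle
      rw [← enorm_eq_nnnorm, ← enorm_eq_nnnorm, ← ofReal_norm, ← ofReal_norm,
        ← ENNReal.ofReal_inv_of_pos hΩpos, ← ENNReal.ofReal_mul (by positivity)]
      apply ENNReal.ofReal_le_ofReal
      rw [norm_div, inv_mul_eq_div]
      gcongr
  · simp [hi]
end
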